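/- Let 𝒥⁺, 𝒥⁻ be partitions of [1,n] into intervals with π⁺ ∪ π⁻ = π, and let σ⁺ (resp. σ⁻) be an involution of [1,n] mapping each component of 𝒥⁺ (resp. of 𝒥⁻) to itself. Let (x_1,…,x_e; τ) be an edge for (σ⁺,σ⁻) with ε_i β_i ∈ R for all i. Let 1 < t < e be such that x_t is an internal turning point, let t₋ be the largest index < t and t₊ the smallest index > t such that x_{t₋}, x_{t₊} are turning points, and set β₋ = β_{t−1}, β₊ = β_t, ε₋ = ε_{t−1}, ε₊ = ε_t, ι₋ = β_{t₋} + β_{t₋+1} + … + β_{t−1}, ι₊ = β_t + β_{t+1} + … + β_{t₊−1}. Suppose that β₋ and β₊ are both nil, i.e. β₋ ∈ K ∪ (−K) and β₊ ∈ K ∪ (−K). Then ε₋(β₋ + ι₊) ∈ K and ε₊(β₊ + ι₋) ∈ K. (Lemma 5.4.) -/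

import Mathlib

open Pointwise

noncomputable def eps (n : ℕ) (i : Fin n) : Fin n → ℝ := Pi.single i 1

/-- The roots of `sl_n`: `ε_i - ε_j` for `i ≠ j`. -/
def Delta (n : ℕ) : Set (Fin n → ℝ) :=
  {v | ∃ i j : Fin n, i ≠ j ∧ v = eps n i - eps n j}

/-- The positive roots: `ε_i - ε_j` for `i < j`. -/
def DeltaPos (n : ℕ) : Set (Fin n → ℝ) :=
  {v | ∃ i j : Fin n, i < j ∧ v = eps n i - eps n j}

/-- The negative roots. -/
def DeltaNeg (n : ℕ) : Set (Fin n → ℝ) := -DeltaPos n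

/-- The simple roots `α_i = ε_i - ε_{i+1}`. -/
def simpleRoots (n : ℕ) : Set (Fin n → ℝ) :=
  {v | ∃ i j : Fin n, (j : ℕ) = (i : ℕ) + 1 ∧ v = eps n i - eps n j}

/-- The set of ℕ-linear combinations of elements of `S`. -/
def Nspan {n : ℕ} (S : Set (Fin n → ℝ)) : Set (Fin n → ℝ) :=
  (AddSubmonoid.closure S : AddSubmonoid (Fin n → ℝ))

/-- `R = (ℕπ⁺ ∪ (−ℕπ⁻)) ∩ Δ`. -/
def Rset (n : ℕ) (Pp Pm : Set (Fin n → ℝ)) : Set (Fin n → ℝ) :=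
  (Nspan Pp ∪ -Nspan Pm) ∩ Delta n

/-- `K = Δ \ R`. -/
def Kset (n : ℕ) (Pp Pm : Set (Fin n → ℝ)) : Set (Fin n → ℝ) :=
  Delta n \ Rset n Pp Pm

/-- `M = R ∩ (−R)`. -/
def Mset (n : ℕ) (Pp Pm : Set (Fin n → ℝ)) : Set (Fin n → ℝ) :=
  Rset n Pp Pm ∩ -Rset n Pp Pm

/-- `R_* = (−R) \ M`. -/
def RstarSet (n : ℕ) (Pp Pm : Set (Fin n → ℝ)) : Set (Fin n → ℝ) :=
  -Rset n Pp Pm \ Mset n Pp Pm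

/-- A partition of `[1,n]` (as `Fin n`) into (nonempty) intervals. -/
def IsIntervalPartitionF (n : ℕ) (J : Set (Set (Fin n))) : Prop :=
  (∀ I ∈ J, ∃ a b : Fin n, a ≤ b ∧ I = Set.Icc a b) ∧
  (⋃₀ J = Set.univ) ∧
  (∀ I ∈ J, ∀ I' ∈ J, I ≠ I' → Disjoint I I')

/-- The set `π` of simple roots `α_i` such that `i` and `i+1` lie in a common component of the
partition `J`. -/
def piOf (n : ℕ) (J : Set (Set (Fin n))) : Set (Fin n → ℝ) :=
  {v | ∃ i j : Fin n, (j : ℕ) = (i : ℕ) + 1 ∧ v = eps n i - eps n j ∧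
    ∃ I ∈ J, i ∈ I ∧ j ∈ I}

/-- An edge for the pair of involutions `(σp, σm)`: a sequence `x 0, …, x (e−1)` of distinct
points with alternating labels `τ 0, …, τ (e−2)` (`true` = `+`), where consecutive points are
exchanged by the corresponding involution, and the two end-points are fixed by the involution
of opposite sign to the adjacent label. (Indices are 0-based.) -/
def IsEdge {n : ℕ} (e : ℕ) (σp σm : Fin n → Fin n) (x : ℕ → Fin n) (τ : ℕ → Bool) : Prop :=
  2 ≤ e ∧
  (∀ i j, i < e → j < e → x i = x j → i = j) ∧
  (∀ i, i + 2 < e → τ (i + 1) = !(τ i)) ∧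
  (∀ i, i + 1 < e → x (i + 1) = (if τ i then σp else σm) (x i) ∧ x (i + 1) ≠ x i) ∧
  (if τ 0 then σm else σp) (x 0) = x 0 ∧
  (if τ (e - 2) then σm else σp) (x (e - 1)) = x (e - 1)

/-- `x i` is an internal turning point: `0 < i < e − 1` and `x i − x (i−1)` and
`x i − x (i+1)` have opposite signs. -/
def InternalTP {n : ℕ} (e : ℕ) (x : ℕ → Fin n) (i : ℕ) : Prop :=
  0 < i ∧ i + 1 < e ∧
    (((x i : ℕ) : ℤ) - ((x (i - 1) : ℕ) : ℤ)) * (((x i : ℕ) : ℤ) - ((x (i + 1) : ℕ) : ℤ)) < 0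

/-- A turning point of the edge: one of the two end-points, or an internal turning point. -/
def TurningPt {n : ℕ} (e : ℕ) (x : ℕ → Fin n) (i : ℕ) : Prop :=
  i = 0 ∨ i = e - 1 ∨ InternalTP e x i

/-- The sign convention: `ε_i ∈ {1, −1}` is defined by `ε_i β_i ∈ Δ⁺` if `τ_i = +` and
`ε_i β_i ∈ Δ⁻` if `τ_i = −`, where `β_i = ε_{x_i} − ε_{x_{i+1}}`. -/
def SignConv {n : ℕ} (e : ℕ) (x : ℕ → Fin n) (τ : ℕ → Bool) (εf : ℕ → ℤ) : Prop :=
  ∀ i, i + 1 < e → (εf i = 1 ∨ εf i = -1) ∧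
    (τ i = true → (εf i : ℝ) • (eps n (x i) - eps n (x (i + 1))) ∈ DeltaPos n) ∧
    (τ i = false → (εf i : ℝ) • (eps n (x i) - eps n (x (i + 1))) ∈ DeltaNeg n)

section
namespace Aux
variable {n : ℕ}
lemma eps_apply (i k : Fin n) : eps n i k = if k = i then 1 else 0 := Pi.single_apply i 1 k

lemma eps_sub_eq_iff {i j k l : Fin n} (hij : i ≠ j) (hkl : k ≠ l) :
    eps n i - eps n j = eps n k - eps n l ↔ i = k ∧ j = l := by
  constructor
  · intro h
    have h1 := congrFun h i
    have h2 := congrFun h j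
    simp only [Pi.sub_apply, eps_apply] at h1 h2
    constructor
    · by_contra hik
      split_ifs at h1 h2 <;> simp_all <;> norm_num at *
    · by_contra hjl
      split_ifs at h1 h2 <;> simp_all <;> norm_num at *
  · rintro ⟨rfl, rfl⟩; rfl

lemma mem_delta {i j : Fin n} (hij : i ≠ j) : eps n i - eps n j ∈ Delta n := ⟨i, j, hij, rfl⟩

lemma mem_deltaPos_iff {i j : Fin n} (hij : i ≠ j) :
    eps n i - eps n j ∈ DeltaPos n ↔ i < j := by
  constructor
  · rintro ⟨k, l, hkl, h⟩
    obtain ⟨rfl, rfl⟩ := (eps_sub_eq_iff hij hkl.ne).mp h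
    exact hkl
  · intro h; exact ⟨i, j, h, rfl⟩

lemma mem_deltaNeg_iff {i j : Fin n} (hij : i ≠ j) :
    eps n i - eps n j ∈ DeltaNeg n ↔ j < i := by
  rw [DeltaNeg, Set.mem_neg, neg_sub, mem_deltaPos_iff hij.symm]


def SameC (J : Set (Set (Fin n))) (i j : Fin n) : Prop := ∃ I ∈ J, i ∈ I ∧ j ∈ I

lemma sameC_symm {J : Set (Set (Fin n))} {i j : Fin n} (h : SameC J i j) : SameC J j i := by
  obtain ⟨I, hI, h1, h2⟩ := h; exact ⟨I, hI, h2, h1⟩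

lemma sameC_refl {J : Set (Set (Fin n))} (hJ : IsIntervalPartitionF n J) (i : Fin n) :
    SameC J i i := by
  have : i ∈ ⋃₀ J := by rw [hJ.2.1]; trivial
  obtain ⟨I, hI, hiI⟩ := this
  exact ⟨I, hI, hiI, hiI⟩

lemma sameC_trans {J : Set (Set (Fin n))} (hJ : IsIntervalPartitionF n J) {i j k : Fin n}
    (h1 : SameC J i j) (h2 : SameC J j k) : SameC J i k := by
  obtain ⟨I, hI, hi, hj⟩ := h1
  obtain ⟨I', hI', hj', hk⟩ := h2
  rcases eq_or_ne I I' with rfl | hne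
  · exact ⟨I, hI, hi, hk⟩
  · exact absurd (Set.disjoint_left.mp (hJ.2.2 I hI I' hI' hne) hj hj') (by simp)

lemma sameC_betw {J : Set (Set (Fin n))} (hJ : IsIntervalPartitionF n J) {i j k : Fin n}
    (h : SameC J i k) (h1 : i ≤ j) (h2 : j ≤ k) : SameC J j k := by
  obtain ⟨I, hI, hi, hk⟩ := h
  obtain ⟨a, b, -, rfl⟩ := hJ.1 I hI
  exact ⟨_, hI, ⟨le_trans hi.1 h1, le_trans h2 hk.2⟩, hk⟩

lemma sameC_betw' {J : Set (Set (Fin n))} (hJ : IsIntervalPartitionF n J) {i j k : Fin n}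
    (h : SameC J i k) (h1 : i ≤ j) (h2 : j ≤ k) : SameC J i j := by
  obtain ⟨I, hI, hi, hk⟩ := h
  obtain ⟨a, b, -, rfl⟩ := hJ.1 I hI
  exact ⟨_, hI, hi, ⟨le_trans hi.1 h1, le_trans h2 hk.2⟩⟩

/-- partial sum functional -/
noncomputable def Fm (n m : ℕ) : (Fin n → ℝ) →+ ℝ :=
  AddMonoidHom.mk' (fun v => ∑ k ∈ Finset.univ.filter (fun k : Fin n => (k : ℕ) ≤ m), v k)
    (by intro a b; simp [Finset.sum_add_distrib])

lemma Fm_eps (m : ℕ) (i : Fin n) : Fm n m (eps n i) = if (i : ℕ) ≤ m then 1 else 0 := by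
  show (∑ k ∈ Finset.univ.filter (fun k : Fin n => (k : ℕ) ≤ m), eps n i k) = _
  simp only [eps_apply]
  rw [Finset.sum_ite_eq' (Finset.univ.filter (fun k : Fin n => (k : ℕ) ≤ m)) i (fun _ => (1:ℝ))]
  simp

lemma nspan_prop {J : Set (Set (Fin n))} {v : Fin n → ℝ}
    (hv : v ∈ Nspan (piOf n J)) (m : ℕ) :
    0 ≤ Fm n m v ∧ (Fm n m v ≠ 0 → ∃ i j : Fin n, (i : ℕ) = m ∧ (j : ℕ) = m + 1 ∧ SameC J i j) := by
  have hv' : v ∈ AddSubmonoid.closure (piOf n J) := hv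
  induction hv' using AddSubmonoid.closure_induction with
  | mem w hw =>
      obtain ⟨i, j, hji, rfl, I, hI, hiI, hjI⟩ := hw
      rw [map_sub, Fm_eps, Fm_eps]
      by_cases h1 : (i : ℕ) ≤ m
      · by_cases h2 : (j : ℕ) ≤ m
        · simp [h1, h2]
        · have him : (i : ℕ) = m := by omega
          refine ⟨by simp [h1, h2], fun _ => ⟨i, j, him, by omega, I, hI, hiI, hjI⟩⟩
      · have h2 : ¬ (j : ℕ) ≤ m := by omega
        simp [h1, h2]
  | zero => simp
  | add w₁ w₂ h₁ h₂ ih₁ ih₂ =>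
      rw [map_add]
      refine ⟨add_nonneg (ih₁ h₁).1 (ih₂ h₂).1, fun hne => ?_⟩
      rcases eq_or_ne (Fm n m w₁) 0 with h | h
      · exact (ih₂ h₂).2 (by intro h'; exact hne (by rw [h, h', add_zero]))
      · exact (ih₁ h₁).2 h

lemma fm_eps_sub (m : ℕ) (i j : Fin n) :
    Fm n m (eps n i - eps n j) =
      (if (i : ℕ) ≤ m then 1 else 0) - (if (j : ℕ) ≤ m then 1 else 0) := by
  rw [map_sub, Fm_eps, Fm_eps]

lemma same_of_adj {J : Set (Set (Fin n))} (hJ : IsIntervalPartitionF n J) {i j : Fin n}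
    (hij : i < j)
    (h : ∀ m : ℕ, (i : ℕ) ≤ m → m < (j : ℕ) → ∃ a b : Fin n, (a : ℕ) = m ∧ (b : ℕ) = m + 1 ∧ SameC J a b) :
    SameC J i j := by
  have hij' : (i : ℕ) < (j : ℕ) := hij
  have key : ∀ d : ℕ, (i : ℕ) + d ≤ (j : ℕ) → ∀ k : Fin n, (k : ℕ) = (i : ℕ) + d → SameC J i k := by
    intro d
    induction d with
    | zero =>
        intro _ k hk
        have : k = i := Fin.ext (by omega)
        rw [this]; exact sameC_refl hJ i
    | succ d ih =>
        intro hd k hk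
        obtain ⟨a, b, ha, hb, hab⟩ := h ((i : ℕ) + d) (by omega) (by omega)
        have h1 : SameC J i a := ih (by omega) a ha
        have h2 : b = k := Fin.ext (by omega)
        subst h2
        exact sameC_trans hJ h1 hab
  exact key ((j : ℕ) - (i : ℕ)) (by omega) j (by omega)

lemma nspan_of_same {J : Set (Set (Fin n))} (hJ : IsIntervalPartitionF n J) :
    ∀ d : ℕ, ∀ i j : Fin n, (j : ℕ) = (i : ℕ) + d → 0 < d → SameC J i j →
      eps n i - eps n j ∈ Nspan (piOf n J) := by
  intro d
  induction d with
  | zero => omega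
  | succ d ih =>
      intro i j hd _ hs
      rcases Nat.eq_zero_or_pos d with rfl | hdpos
      · exact AddSubmonoid.subset_closure ⟨i, j, by omega, rfl, hs⟩
      · have hi1 : (i : ℕ) + 1 < n := by have := j.isLt; omega
        set i1 : Fin n := ⟨(i : ℕ) + 1, hi1⟩ with hi1def
        have hii1 : i ≤ i1 := by simp [Fin.le_def, hi1def]
        have hi1j : i1 ≤ j := by simp [Fin.le_def, hi1def]; omega
        have h1 : SameC J i i1 := sameC_betw' hJ hs hii1 hi1j
        have h2 : SameC J i1 j := sameC_betw hJ hs hii1 hi1j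
        have heq : eps n i - eps n j = (eps n i - eps n i1) + (eps n i1 - eps n j) := by abel
        rw [heq]
        exact AddSubmonoid.add_mem _
          (AddSubmonoid.subset_closure ⟨i, i1, by simp [hi1def], rfl, h1⟩)
          (ih i1 j (by simp [hi1def]; omega) hdpos h2)

lemma mem_nspan_iff {J : Set (Set (Fin n))} (hJ : IsIntervalPartitionF n J) {i j : Fin n}
    (hij : i ≠ j) :
    eps n i - eps n j ∈ Nspan (piOf n J) ↔ i < j ∧ SameC J i j := by
  constructor
  · intro hv
    have hlt : i < j := by
      rcases hij.lt_or_gt with h | h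
      · exact h
      · exfalso
        have := (nspan_prop hv (j : ℕ)).1
        rw [fm_eps_sub] at this
        have h1 : ¬ (i : ℕ) ≤ (j : ℕ) := by rw [Fin.lt_def] at h; omega
        simp [h1] at this
        linarith
    refine ⟨hlt, same_of_adj hJ hlt ?_⟩
    intro m hm1 hm2
    have h := (nspan_prop hv m).2
    rw [fm_eps_sub] at h
    have h1 : (i : ℕ) ≤ m := hm1
    have h2 : ¬ (j : ℕ) ≤ m := by omega
    simpa [h1, h2] using h
  · rintro ⟨hlt, hs⟩
    exact nspan_of_same hJ ((j : ℕ) - (i : ℕ)) i j (by rw [Fin.lt_def] at hlt; omega)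
      (by rw [Fin.lt_def] at hlt; omega) hs

lemma mem_Kset_iff {Jp Jm : Set (Set (Fin n))} (hJp : IsIntervalPartitionF n Jp)
    (hJm : IsIntervalPartitionF n Jm) {i j : Fin n} (hij : i ≠ j) :
    eps n i - eps n j ∈ Kset n (piOf n Jp) (piOf n Jm) ↔
      (i < j ∧ ¬ SameC Jp i j) ∨ (j < i ∧ ¬ SameC Jm j i) := by
  have hR : eps n i - eps n j ∈ Rset n (piOf n Jp) (piOf n Jm) ↔
      (i < j ∧ SameC Jp i j) ∨ (j < i ∧ SameC Jm j i) := by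
    constructor
    · rintro ⟨h | h, -⟩
      · exact Or.inl ((mem_nspan_iff hJp hij).mp h)
      · rw [Set.mem_neg, neg_sub] at h
        exact Or.inr ((mem_nspan_iff hJm hij.symm).mp h)
    · rintro (⟨h1, h2⟩ | ⟨h1, h2⟩)
      · exact ⟨Or.inl ((mem_nspan_iff hJp hij).mpr ⟨h1, h2⟩), mem_delta hij⟩
      · refine ⟨Or.inr ?_, mem_delta hij⟩
        rw [Set.mem_neg, neg_sub]
        exact (mem_nspan_iff hJm hij.symm).mpr ⟨h1, h2⟩
  rw [Kset, Set.mem_diff, hR]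
  have hd := mem_delta hij
  rcases hij.lt_or_gt with h | h
  · have h' : ¬ j < i := by rw [Fin.lt_def] at h ⊢; omega
    constructor
    · rintro ⟨-, hnot⟩
      exact Or.inl ⟨h, fun hs => hnot (Or.inl ⟨h, hs⟩)⟩
    · rintro (⟨-, hnot⟩ | ⟨hlt, -⟩)
      · refine ⟨hd, ?_⟩
        rintro (⟨-, hs⟩ | ⟨hlt, -⟩)
        · exact hnot hs
        · exact h' hlt
      · exact absurd hlt h'
  · have h' : ¬ i < j := by rw [Fin.lt_def] at h ⊢; omega
    constructor
    · rintro ⟨-, hnot⟩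
      exact Or.inr ⟨h, fun hs => hnot (Or.inr ⟨h, hs⟩)⟩
    · rintro (⟨hlt, -⟩ | ⟨-, hnot⟩)
      · exact absurd hlt h'
      · refine ⟨hd, ?_⟩
        rintro (⟨hlt, -⟩ | ⟨-, hs⟩)
        · exact h' hlt
        · exact hnot hs

lemma opp_signs {a b c : ℤ} (h : (b - a) * (b - c) < 0) :
    (a < b ∧ b < c) ∨ (c < b ∧ b < a) := by
  rcases mul_neg_iff.mp h with ⟨h1, h2⟩ | ⟨h1, h2⟩
  · exact Or.inl ⟨by omega, by omega⟩
  · exact Or.inr ⟨by omega, by omega⟩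

lemma same_signs {a b c : ℤ} (h : 0 < (b - a) * (b - c)) :
    (a < b ∧ c < b) ∨ (b < a ∧ b < c) := by
  rcases mul_pos_iff.mp h with ⟨h1, h2⟩ | ⟨h1, h2⟩
  · exact Or.inl ⟨by omega, by omega⟩
  · exact Or.inr ⟨by omega, by omega⟩

lemma core {α : Type*} [LinearOrder α] (S : α → α → Prop)
    (hsymm : ∀ a b, S a b → S b a)
    (htrans : ∀ a b c, S a b → S b c → S a c)
    (hbetw : ∀ a b c, S a c → a ≤ b → b ≤ c → S b c)
    (y : ℕ → α) (m : ℕ) (hm : 1 ≤ m) (p : α)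
    (hp0 : p < y 0) (h01 : y 0 < y 1)
    (hne : ¬ S (y 0) (y 1))
    (hstep : ∀ k, k < m → ¬ Even k → S (y k) (y (k + 1)))
    (hext : ∀ k, 1 ≤ k → k < m →
      (y (k - 1) < y k ∧ y (k + 1) < y k) ∨ (y k < y (k - 1) ∧ y k < y (k + 1))) :
    ∀ z, S p z → z < y m := by
  have D : ∀ k, k < m → ((Even k → y k < y (k + 1)) ∧ (¬ Even k → y (k + 1) < y k)) := by
    intro k
    induction k with
    | zero => intro _; exact ⟨fun _ => h01, fun h => absurd (by simp) h⟩
    | succ k ih =>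
        intro hk
        have ihk := ih (by omega)
        have he := hext (k + 1) (by omega) hk
        simp only [Nat.add_sub_cancel] at he
        rcases Nat.even_or_odd k with hev | hodd
        · have h1 : y k < y (k + 1) := ihk.1 hev
          have h2 : y (k + 2) < y (k + 1) := by
            rcases he with ⟨-, h⟩ | ⟨h, -⟩
            · exact h
            · exact absurd h1 (by simp [not_lt, le_of_lt h])
          constructor
          · intro h; exact absurd h (by simp [Nat.even_add_one, hev])
          · intro _; exact h2
        · have h1 : y (k + 1) < y k := ihk.2 (Nat.not_even_iff_odd.mpr hodd)
          have h2 : y (k + 1) < y (k + 2) := by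
            rcases he with ⟨h, -⟩ | ⟨-, h⟩
            · exact absurd h1 (by simp [not_lt, le_of_lt h])
            · exact h
          constructor
          · intro _; exact h2
          · intro h; exact absurd (Nat.even_add_one.mpr (Nat.not_even_iff_odd.mpr hodd)) h
  have Q : ∀ k, 1 ≤ k → k ≤ m → ∀ z, S p z → z < y k := by
    intro k
    induction k with
    | zero => omega
    | succ k ih =>
        intro _ hk z hz
        rcases Nat.eq_zero_or_pos k with rfl | hpos
        · by_contra hle
          push_neg at hle
          have hSpz : S (y 1) z := hbetw _ _ _ hz (le_of_lt (lt_trans hp0 h01)) hle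
          have hS1 : S p (y 1) := htrans _ _ _ hz (hsymm _ _ hSpz)
          have : S (y 0) (y 1) := hbetw _ _ _ hS1 (le_of_lt hp0) (le_of_lt h01)
          exact hne this
        · have ihz := ih hpos (by omega)
          have hzk : z < y k := ihz z hz
          have hkm : k < m := by omega
          rcases Nat.even_or_odd k with hev | hodd
          · exact lt_trans hzk ((D k hkm).1 hev)
          · have hs := hstep k hkm (Nat.not_even_iff_odd.mpr hodd)
            by_contra hle
            push_neg at hle
            have h2 : S z (y k) := hbetw _ _ _ (hsymm _ _ hs) hle (le_of_lt hzk)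
            have h3 : S p (y k) := htrans _ _ _ hz h2
            exact absurd (ihz _ h3) (lt_irrefl _)
  exact Q m hm le_rfl

lemma core' {α : Type*} [LinearOrder α] (S : α → α → Prop)
    (hsymm : ∀ a b, S a b → S b a)
    (htrans : ∀ a b c, S a b → S b c → S a c)
    (hbetw : ∀ a b c, S a c → a ≤ b → b ≤ c → S b c)
    (y : ℕ → α) (m : ℕ) (hm : 1 ≤ m) (p : α)
    (hp0 : y 0 < p) (h01 : y 1 < y 0)
    (hne : ¬ S (y 0) (y 1))
    (hstep : ∀ k, k < m → ¬ Even k → S (y k) (y (k + 1)))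
    (hext : ∀ k, 1 ≤ k → k < m →
      (y (k - 1) < y k ∧ y (k + 1) < y k) ∨ (y k < y (k - 1) ∧ y k < y (k + 1))) :
    ∀ z, S p z → y m < z := by
  have hbetw' : ∀ a b c : αᵒᵈ, S a c → a ≤ b → b ≤ c → S b c := by
    intro a b c hac hab hbc
    have h1 : S c a := hsymm _ _ hac
    have h2 : S b a := hbetw c b a h1 hbc hab
    exact htrans _ _ _ h2 hac
  have := core (α := αᵒᵈ) S hsymm htrans hbetw'
    (fun k => OrderDual.toDual (y k)) m hm (OrderDual.toDual p)
    (by simpa using hp0) (by simpa using h01) hne hstep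
    (by intro k h1 h2
        rcases hext k h1 h2 with ⟨ha, hb⟩ | ⟨ha, hb⟩
        · exact Or.inr ⟨by simpa using ha, by simpa using hb⟩
        · exact Or.inl ⟨by simpa using ha, by simpa using hb⟩)
  intro z hz
  simpa using this (OrderDual.toDual z) hz

lemma sum_tele {M : Type*} [AddCommGroup M] (g : ℕ → M) (a b : ℕ) (hab : a ≤ b) :
    ∑ i ∈ Finset.Ico a b, (g i - g (i + 1)) = g a - g b := by
  rw [Finset.sum_Ico_eq_sum_range]
  have hb' : a + (b - a) = b := by omega
  calc ∑ k ∈ Finset.range (b - a), (g (a + k) - g (a + k + 1))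
      = (fun k => g (a + k)) 0 - (fun k => g (a + k)) (b - a) :=
        Finset.sum_range_sub' (fun k => g (a + k)) (b - a)
    _ = g a - g b := by simp [hb']


lemma sign_eval {c : ℤ} {i j : Fin n} (hij : i ≠ j)
    (h : (c : ℝ) • (eps n i - eps n j) ∈ DeltaPos n) (hc : c = 1 ∨ c = -1) :
    (c = 1 ∧ i < j) ∨ (c = -1 ∧ j < i) := by
  rcases hc with rfl | rfl
  · have h' : eps n i - eps n j ∈ DeltaPos n := by simpa using h
    exact Or.inl ⟨rfl, (mem_deltaPos_iff hij).mp h'⟩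
  · have h' : eps n j - eps n i ∈ DeltaPos n := by
      have heq : (((-1 : ℤ)) : ℝ) • (eps n i - eps n j) = eps n j - eps n i := by
        push_cast
        rw [neg_one_smul, neg_sub]
      rwa [heq] at h
    exact Or.inr ⟨rfl, (mem_deltaPos_iff hij.symm).mp h'⟩

lemma sign_eval_neg {c : ℤ} {i j : Fin n} (hij : i ≠ j)
    (h : (c : ℝ) • (eps n i - eps n j) ∈ DeltaNeg n) (hc : c = 1 ∨ c = -1) :
    (c = 1 ∧ j < i) ∨ (c = -1 ∧ i < j) := by
  rcases hc with rfl | rfl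
  · have h' : eps n i - eps n j ∈ DeltaNeg n := by simpa using h
    exact Or.inl ⟨rfl, (mem_deltaNeg_iff hij).mp h'⟩
  · have h' : eps n j - eps n i ∈ DeltaNeg n := by
      have heq : (((-1 : ℤ)) : ℝ) • (eps n i - eps n j) = eps n j - eps n i := by
        push_cast
        rw [neg_one_smul, neg_sub]
      rwa [heq] at h
    exact Or.inr ⟨rfl, (mem_deltaNeg_iff hij.symm).mp h'⟩
end Aux
end

open Aux in
/-- Lemma 5.4: if both boundary values `β₋ = β_{t−1}` and `β₊ = β_t` at an internal turning
point `x t` are nil, then `ε₋(β₋ + ι₊) ∈ K` and `ε₊(β₊ + ι₋) ∈ K`, where `ι₋`, `ι₊` are the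
simple interval values on either side of `x t`. -/
theorem statement_14 (n : ℕ) (hn : 2 ≤ n)
    (Jp Jm : Set (Set (Fin n)))
    (hJp : IsIntervalPartitionF n Jp) (hJm : IsIntervalPartitionF n Jm)
    (hU : piOf n Jp ∪ piOf n Jm = simpleRoots n)
    (σp σm : Fin n → Fin n)
    (hσp : ∀ t, σp (σp t) = t) (hσm : ∀ t, σm (σm t) = t)
    (hσpstable : ∀ I ∈ Jp, ∀ a ∈ I, σp a ∈ I)
    (hσmstable : ∀ I ∈ Jm, ∀ a ∈ I, σm a ∈ I)
    (e : ℕ) (x : ℕ → Fin n) (τ : ℕ → Bool)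
    (hedge : IsEdge e σp σm x τ)
    (εf : ℕ → ℤ) (hsign : SignConv e x τ εf)
    (hR : ∀ i, i + 1 < e →
      (εf i : ℝ) • (eps n (x i) - eps n (x (i + 1))) ∈ Rset n (piOf n Jp) (piOf n Jm))
    (t : ℕ) (ht : InternalTP e x t)
    (tm : ℕ) (htm1 : tm < t) (htm2 : TurningPt e x tm)
    (htm3 : ∀ u, tm < u → u < t → ¬ TurningPt e x u)
    (tp : ℕ) (htp1 : t < tp) (htp2 : TurningPt e x tp)
    (htp3 : ∀ u, t < u → u < tp → ¬ TurningPt e x u)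
    (hnilm : eps n (x (t - 1)) - eps n (x t)
      ∈ Kset n (piOf n Jp) (piOf n Jm) ∪ -Kset n (piOf n Jp) (piOf n Jm))
    (hnilp : eps n (x t) - eps n (x (t + 1))
      ∈ Kset n (piOf n Jp) (piOf n Jm) ∪ -Kset n (piOf n Jp) (piOf n Jm)) :
    (εf (t - 1) : ℝ) • ((eps n (x (t - 1)) - eps n (x t)) +
        ∑ i ∈ Finset.Ico t tp, (eps n (x i) - eps n (x (i + 1))))
      ∈ Kset n (piOf n Jp) (piOf n Jm) ∧
    (εf t : ℝ) • ((eps n (x t) - eps n (x (t + 1))) +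
        ∑ i ∈ Finset.Ico tm t, (eps n (x i) - eps n (x (i + 1))))
      ∈ Kset n (piOf n Jp) (piOf n Jm) := by
    classical
  obtain ⟨he2, hinj, haltern, hstepE, -, -⟩ := hedge
  obtain ⟨htpos, hte, htprod⟩ := ht
  have htpe : tp + 1 ≤ e := by
    rcases htp2 with h | h | h
    · omega
    · omega
    · have := h.2.1; omega
  have htt : t - 1 + 1 = t := by omega
  -- consecutive points are in a common component
  have hstepSame : ∀ u, u + 1 < e →
      SameC (if τ u = true then Jp else Jm) (x u) (x (u + 1)) := by
    intro u hu
    have h := (hstepE u hu).1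
    by_cases hτ : τ u = true
    · rw [if_pos hτ] at h ⊢
      have hx : x u ∈ ⋃₀ Jp := by rw [hJp.2.1]; trivial
      obtain ⟨I, hI, hxI⟩ := hx
      exact ⟨I, hI, hxI, by rw [h]; exact hσpstable I hI _ hxI⟩
    · rw [if_neg hτ] at h ⊢
      have hx : x u ∈ ⋃₀ Jm := by rw [hJm.2.1]; trivial
      obtain ⟨I, hI, hxI⟩ := hx
      exact ⟨I, hI, hxI, by rw [h]; exact hσmstable I hI _ hxI⟩
  -- alternation of labels
  have halt2 : ∀ a k, a + k + 1 < e → τ (a + k) = (if Even k then τ a else !(τ a)) := by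
    intro a k
    induction k with
    | zero => intro _; simp
    | succ k ih =>
        intro h
        have hik := ih (by omega)
        have hstep1 : τ (a + k + 1) = !(τ (a + k)) := haltern (a + k) (by omega)
        have hidx : a + (k + 1) = a + k + 1 := by omega
        rw [hidx, hstep1, hik]
        rcases Nat.even_or_odd k with hev | hodd
        · rw [if_pos hev, if_neg (by simp [Nat.even_add_one, hev])]
        · rw [if_neg (by simpa using Nat.not_even_iff_odd.mpr hodd),
            if_pos (Nat.even_add_one.mpr (Nat.not_even_iff_odd.mpr hodd)), Bool.not_not]
  have hτt : τ t = !(τ (t - 1)) := by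
    have h := halt2 (t - 1) 1 (by omega)
    rw [htt] at h
    rw [if_neg (by decide)] at h
    exact h
  -- non-turning interior points are strict local extrema
  have hextB : ∀ u, 0 < u → u + 1 < e → ¬ TurningPt e x u →
      (x (u - 1) < x u ∧ x (u + 1) < x u) ∨ (x u < x (u - 1) ∧ x u < x (u + 1)) := by
    intro u hu0 hue hnt
    rw [TurningPt] at hnt
    push_neg at hnt
    obtain ⟨-, -, hni⟩ := hnt
    have hprod : ¬ ((((x u : ℕ) : ℤ) - ((x (u - 1) : ℕ) : ℤ)) *
        (((x u : ℕ) : ℤ) - ((x (u + 1) : ℕ) : ℤ)) < 0) := fun hc => hni ⟨hu0, hue, hc⟩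
    push_neg at hprod
    have hd1 : x (u - 1) ≠ x u := by
      intro hq
      have := hinj (u - 1) u (by omega) (by omega) hq
      omega
    have hd2 : x (u + 1) ≠ x u := by
      intro hq
      have := hinj (u + 1) u (by omega) (by omega) hq
      omega
    have f1 : (((x u : ℕ) : ℤ) - ((x (u - 1) : ℕ) : ℤ)) ≠ 0 := by
      intro h0
      exact hd1 (Fin.ext (by omega))
    have f2 : (((x u : ℕ) : ℤ) - ((x (u + 1) : ℕ) : ℤ)) ≠ 0 := by
      intro h0
      exact hd2 (Fin.ext (by omega))
    have hpos := hprod.lt_of_ne (Ne.symm (mul_ne_zero f1 f2))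
    rcases same_signs hpos with ⟨h1, h2⟩ | ⟨h1, h2⟩
    · exact Or.inl ⟨Fin.lt_def.mpr (by omega), Fin.lt_def.mpr (by omega)⟩
    · exact Or.inr ⟨Fin.lt_def.mpr (by omega), Fin.lt_def.mpr (by omega)⟩
  -- distinctness at t
  have hABne : x (t - 1) ≠ x t := by
    intro hq; have := hinj (t - 1) t (by omega) (by omega) hq; omega
  have hBCne : x t ≠ x (t + 1) := by
    intro hq; have := hinj t (t + 1) (by omega) (by omega) hq; omega
  -- component memberships at t
  have hAB : SameC (if τ (t - 1) = true then Jp else Jm) (x (t - 1)) (x t) := by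
    have h := hstepSame (t - 1) (by omega)
    rwa [htt] at h
  have hBC : SameC (if τ t = true then Jp else Jm) (x t) (x (t + 1)) := hstepSame t hte
  -- nil conditions
  have hnotAB2 : ¬ SameC (if τ t = true then Jp else Jm) (x (t - 1)) (x t) := by
    intro hcon
    have hb : SameC Jp (x (t - 1)) (x t) ∧ SameC Jm (x (t - 1)) (x t) := by
      cases hB : τ (t - 1) with
      | false =>
          rw [if_neg (by simp [hB])] at hAB
          have h2 : τ t = true := by rw [hτt, hB]; rfl
          rw [if_pos h2] at hcon
          exact ⟨hcon, hAB⟩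
      | true =>
          rw [if_pos hB] at hAB
          have h2 : τ t = false := by rw [hτt, hB]; rfl
          rw [if_neg (by simp [h2])] at hcon
          exact ⟨hAB, hcon⟩
    rcases hnilm with hK | hK
    · rcases (mem_Kset_iff hJp hJm hABne).mp hK with ⟨-, hnot⟩ | ⟨-, hnot⟩
      · exact hnot hb.1
      · exact hnot (sameC_symm hb.2)
    · rw [Set.mem_neg, neg_sub] at hK
      rcases (mem_Kset_iff hJp hJm hABne.symm).mp hK with ⟨-, hnot⟩ | ⟨-, hnot⟩
      · exact hnot (sameC_symm hb.1)
      · exact hnot hb.2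
  have hnotBC1 : ¬ SameC (if τ (t - 1) = true then Jp else Jm) (x t) (x (t + 1)) := by
    intro hcon
    have hb : SameC Jp (x t) (x (t + 1)) ∧ SameC Jm (x t) (x (t + 1)) := by
      cases hB : τ (t - 1) with
      | false =>
          rw [if_neg (by simp [hB])] at hcon
          have h2 : τ t = true := by rw [hτt, hB]; rfl
          rw [if_pos h2] at hBC
          exact ⟨hBC, hcon⟩
      | true =>
          rw [if_pos hB] at hcon
          have h2 : τ t = false := by rw [hτt, hB]; rfl
          rw [if_neg (by simp [h2])] at hBC
          exact ⟨hcon, hBC⟩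
    rcases hnilp with hK | hK
    · rcases (mem_Kset_iff hJp hJm hBCne).mp hK with ⟨-, hnot⟩ | ⟨-, hnot⟩
      · exact hnot hb.1
      · exact hnot (sameC_symm hb.2)
    · rw [Set.mem_neg, neg_sub] at hK
      rcases (mem_Kset_iff hJp hJm hBCne.symm).mp hK with ⟨-, hnot⟩ | ⟨-, hnot⟩
      · exact hnot (sameC_symm hb.1)
      · exact hnot hb.2
  have hJ1 : IsIntervalPartitionF n (if τ (t - 1) = true then Jp else Jm) := by
    split_ifs <;> assumption
  have hJ2 : IsIntervalPartitionF n (if τ t = true then Jp else Jm) := by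
    split_ifs <;> assumption
  -- step/extremum data for the right-hand run
  have hstepR : ∀ k, k < tp - t → ¬ Even k →
      SameC (if τ (t - 1) = true then Jp else Jm) (x (t + k)) (x (t + k + 1)) := by
    intro k hk hodd
    have hs := hstepSame (t + k) (by omega)
    have hτeq : τ (t + k) = τ (t - 1) := by
      have h := halt2 (t - 1) (k + 1) (by omega)
      rw [show t - 1 + (k + 1) = t + k from by omega] at h
      rw [h, if_pos (Nat.even_add_one.mpr hodd)]
    rwa [hτeq] at hs
  have hextR : ∀ k, 1 ≤ k → k < tp - t →
      (x (t + (k - 1)) < x (t + k) ∧ x (t + (k + 1)) < x (t + k)) ∨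
      (x (t + k) < x (t + (k - 1)) ∧ x (t + k) < x (t + (k + 1))) := by
    intro k h1 h2
    have hres := hextB (t + k) (by omega) (by omega) (htp3 (t + k) (by omega) (by omega))
    rw [show t + k - 1 = t + (k - 1) from by omega] at hres
    exact hres
  -- step/extremum data for the left-hand run
  have hstepL : ∀ k, k < t - tm → ¬ Even k →
      SameC (if τ t = true then Jp else Jm) (x (t - k)) (x (t - (k + 1))) := by
    intro k hk hodd
    have hs := hstepSame (t - (k + 1)) (by omega)
    rw [show t - (k + 1) + 1 = t - k from by omega] at hs
    have hτeq : τ (t - (k + 1)) = τ t := by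
      have h := halt2 (t - (k + 1)) (k + 1) (by omega)
      rw [show t - (k + 1) + (k + 1) = t from by omega] at h
      rw [h, if_pos (Nat.even_add_one.mpr hodd)]
    rw [hτeq] at hs
    exact sameC_symm hs
  have hextL : ∀ k, 1 ≤ k → k < t - tm →
      (x (t - (k - 1)) < x (t - k) ∧ x (t - (k + 1)) < x (t - k)) ∨
      (x (t - k) < x (t - (k - 1)) ∧ x (t - k) < x (t - (k + 1))) := by
    intro k h1 h2
    have hres := hextB (t - k) (by omega) (by omega) (htm3 (t - k) (by omega) (by omega))
    rw [show t - k - 1 = t - (k + 1) from by omega,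
      show t - k + 1 = t - (k - 1) from by omega] at hres
    rcases hres with ⟨ha, hb⟩ | ⟨ha, hb⟩
    · exact Or.inl ⟨hb, ha⟩
    · exact Or.inr ⟨hb, ha⟩
  -- rewrite the goal via telescoping
  have hsum1 : ∑ i ∈ Finset.Ico t tp, (eps n (x i) - eps n (x (i + 1))) =
      eps n (x t) - eps n (x tp) := by
    have h := sum_tele (fun i => eps n (x i)) t tp (le_of_lt htp1)
    simpa using h
  have hsum2 : ∑ i ∈ Finset.Ico tm t, (eps n (x i) - eps n (x (i + 1))) =
      eps n (x tm) - eps n (x t) := by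
    have h := sum_tele (fun i => eps n (x i)) tm t (le_of_lt htm1)
    simpa using h
  rw [hsum1, hsum2,
    show eps n (x (t - 1)) - eps n (x t) + (eps n (x t) - eps n (x tp)) =
      eps n (x (t - 1)) - eps n (x tp) from by abel,
    show eps n (x t) - eps n (x (t + 1)) + (eps n (x tm) - eps n (x t)) =
      eps n (x tm) - eps n (x (t + 1)) from by abel]
  have hsg1 := hsign (t - 1) (by omega)
  rw [htt] at hsg1
  have hsg2 := hsign t hte
  have hone : ((1 : ℤ) : ℝ) = 1 := by norm_num
  have hmone : ((-1 : ℤ) : ℝ) = -1 := by norm_num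
  rcases opp_signs htprod with ⟨hab, hbc⟩ | ⟨hcb, hba⟩
  · -- increasing at t : x (t-1) < x t < x (t+1)
    have hAB' : x (t - 1) < x t := Fin.lt_def.mpr (by omega)
    have hBC' : x t < x (t + 1) := Fin.lt_def.mpr (by omega)
    have hcore1 := core (SameC (if τ (t - 1) = true then Jp else Jm))
      (fun a b h => sameC_symm h) (fun a b c h1 h2 => sameC_trans hJ1 h1 h2)
      (fun a b c h h1 h2 => sameC_betw hJ1 h h1 h2)
      (fun k => x (t + k)) (tp - t) (by omega) (x (t - 1))
      hAB' hBC' hnotBC1 hstepR hextR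
    have hcore1' : ∀ z, SameC (if τ (t - 1) = true then Jp else Jm) (x (t - 1)) z →
        z < x tp := by
      intro z hz
      have h : z < x (t + (tp - t)) := hcore1 z hz
      rwa [show t + (tp - t) = tp from by omega] at h
    have hAd : x (t - 1) < x tp := hcore1' _ (sameC_refl hJ1 _)
    have hnotS1 : ¬ SameC (if τ (t - 1) = true then Jp else Jm) (x (t - 1)) (x tp) :=
      fun h => absurd (hcore1' _ h) (lt_irrefl _)
    have hcore2 := core' (SameC (if τ t = true then Jp else Jm))
      (fun a b h => sameC_symm h) (fun a b c h1 h2 => sameC_trans hJ2 h1 h2)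
      (fun a b c h h1 h2 => sameC_betw hJ2 h h1 h2)
      (fun k => x (t - k)) (t - tm) (by omega) (x (t + 1))
      hBC' hAB' (fun h => hnotAB2 (sameC_symm h)) hstepL hextL
    have hcore2' : ∀ z, SameC (if τ t = true then Jp else Jm) (x (t + 1)) z →
        x tm < z := by
      intro z hz
      have h : x (t - (t - tm)) < z := hcore2 z hz
      rwa [show t - (t - tm) = tm from by omega] at h
    have hGd : x tm < x (t + 1) := hcore2' _ (sameC_refl hJ2 _)
    have hnotS2 : ¬ SameC (if τ t = true then Jp else Jm) (x (t + 1)) (x tm) :=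
      fun h => absurd (hcore2' _ h) (lt_irrefl _)
    cases hτ : τ (t - 1) with
    | true =>
        have hτt' : τ t = false := by rw [hτt, hτ]; rfl
        rw [if_pos hτ] at hnotS1
        rw [if_neg (by simp [hτt'])] at hnotS2
        constructor
        · rcases sign_eval hABne (hsg1.2.1 hτ) hsg1.1 with ⟨hε, -⟩ | ⟨-, hlt⟩
          · rw [hε, hone, one_smul]
            exact (mem_Kset_iff hJp hJm hAd.ne).mpr (Or.inl ⟨hAd, hnotS1⟩)
          · exact (lt_asymm hAB' hlt).elim
        · rcases sign_eval_neg hBCne (hsg2.2.2 hτt') hsg2.1 with ⟨-, hlt⟩ | ⟨hε, -⟩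
          · exact (lt_asymm hBC' hlt).elim
          · rw [hε, hmone, neg_one_smul, neg_sub]
            exact (mem_Kset_iff hJp hJm hGd.ne').mpr
              (Or.inr ⟨hGd, fun h => hnotS2 (sameC_symm h)⟩)
    | false =>
        have hτt' : τ t = true := by rw [hτt, hτ]; rfl
        rw [if_neg (by simp [hτ])] at hnotS1
        rw [if_pos hτt'] at hnotS2
        constructor
        · rcases sign_eval_neg hABne (hsg1.2.2 hτ) hsg1.1 with ⟨-, hlt⟩ | ⟨hε, -⟩
          · exact (lt_asymm hAB' hlt).elim
          · rw [hε, hmone, neg_one_smul, neg_sub]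
            exact (mem_Kset_iff hJp hJm hAd.ne').mpr (Or.inr ⟨hAd, hnotS1⟩)
        · rcases sign_eval hBCne (hsg2.2.1 hτt') hsg2.1 with ⟨hε, -⟩ | ⟨-, hlt⟩
          · rw [hε, hone, one_smul]
            exact (mem_Kset_iff hJp hJm hGd.ne).mpr
              (Or.inl ⟨hGd, fun h => hnotS2 (sameC_symm h)⟩)
          · exact (lt_asymm hBC' hlt).elim
  · -- decreasing at t : x (t+1) < x t < x (t-1)
    have hBA' : x t < x (t - 1) := Fin.lt_def.mpr (by omega)
    have hCB' : x (t + 1) < x t := Fin.lt_def.mpr (by omega)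
    have hcore1 := core' (SameC (if τ (t - 1) = true then Jp else Jm))
      (fun a b h => sameC_symm h) (fun a b c h1 h2 => sameC_trans hJ1 h1 h2)
      (fun a b c h h1 h2 => sameC_betw hJ1 h h1 h2)
      (fun k => x (t + k)) (tp - t) (by omega) (x (t - 1))
      hBA' hCB' hnotBC1 hstepR hextR
    have hcore1' : ∀ z, SameC (if τ (t - 1) = true then Jp else Jm) (x (t - 1)) z →
        x tp < z := by
      intro z hz
      have h : x (t + (tp - t)) < z := hcore1 z hz
      rwa [show t + (tp - t) = tp from by omega] at h
    have hAd : x tp < x (t - 1) := hcore1' _ (sameC_refl hJ1 _)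
    have hnotS1 : ¬ SameC (if τ (t - 1) = true then Jp else Jm) (x (t - 1)) (x tp) :=
      fun h => absurd (hcore1' _ h) (lt_irrefl _)
    have hcore2 := core (SameC (if τ t = true then Jp else Jm))
      (fun a b h => sameC_symm h) (fun a b c h1 h2 => sameC_trans hJ2 h1 h2)
      (fun a b c h h1 h2 => sameC_betw hJ2 h h1 h2)
      (fun k => x (t - k)) (t - tm) (by omega) (x (t + 1))
      hCB' hBA' (fun h => hnotAB2 (sameC_symm h)) hstepL hextL
    have hcore2' : ∀ z, SameC (if τ t = true then Jp else Jm) (x (t + 1)) z →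
        z < x tm := by
      intro z hz
      have h : z < x (t - (t - tm)) := hcore2 z hz
      rwa [show t - (t - tm) = tm from by omega] at h
    have hGd : x (t + 1) < x tm := hcore2' _ (sameC_refl hJ2 _)
    have hnotS2 : ¬ SameC (if τ t = true then Jp else Jm) (x (t + 1)) (x tm) :=
      fun h => absurd (hcore2' _ h) (lt_irrefl _)
    cases hτ : τ (t - 1) with
    | true =>
        have hτt' : τ t = false := by rw [hτt, hτ]; rfl
        rw [if_pos hτ] at hnotS1
        rw [if_neg (by simp [hτt'])] at hnotS2
        constructor
        · rcases sign_eval hABne (hsg1.2.1 hτ) hsg1.1 with ⟨-, hlt⟩ | ⟨hε, -⟩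
          · exact (lt_asymm hBA' hlt).elim
          · rw [hε, hmone, neg_one_smul, neg_sub]
            exact (mem_Kset_iff hJp hJm hAd.ne).mpr
              (Or.inl ⟨hAd, fun h => hnotS1 (sameC_symm h)⟩)
        · rcases sign_eval_neg hBCne (hsg2.2.2 hτt') hsg2.1 with ⟨hε, -⟩ | ⟨-, hlt⟩
          · rw [hε, hone, one_smul]
            exact (mem_Kset_iff hJp hJm hGd.ne').mpr (Or.inr ⟨hGd, hnotS2⟩)
          · exact (lt_asymm hCB' hlt).elim
    | false =>
        have hτt' : τ t = true := by rw [hτt, hτ]; rfl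
        rw [if_neg (by simp [hτ])] at hnotS1
        rw [if_pos hτt'] at hnotS2
        constructor
        · rcases sign_eval_neg hABne (hsg1.2.2 hτ) hsg1.1 with ⟨hε, -⟩ | ⟨-, hlt⟩
          · rw [hε, hone, one_smul]
            exact (mem_Kset_iff hJp hJm hAd.ne').mpr
              (Or.inr ⟨hAd, fun h => hnotS1 (sameC_symm h)⟩)
          · exact (lt_asymm hBA' hlt).elim
        · rcases sign_eval hBCne (hsg2.2.1 hτt') hsg2.1 with ⟨-, hlt⟩ | ⟨hε, -⟩
          · exact (lt_asymm hCB' hlt).elim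
          · rw [hε, hmone, neg_one_smul, neg_sub]
            exact (mem_Kset_iff hJp hJm hGd.ne).mpr (Or.inl ⟨hGd, hnotS2⟩)
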